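/- For every complex number q with |q| < 1, θ₂(q)⁴ + θ₄(q)⁴ = θ₃(q)⁴, where θ₂(q) = 2·Σ_{n≥0} q^{(n+1/2)²}, θ₃(q) = Σ_{n∈ℤ} q^{n²} and θ₄(q) = Σ_{n∈ℤ} (−1)ⁿ q^{n²}. -/

import Mathlib

/-- Jacobi theta function `θ₂(q) = 2 ∑_{n ≥ 0} q^{(n+1/2)²}` (principal powers). -/
noncomputable def theta2 (q : ℂ) : ℂ := 2 * ∑' n : ℕ, q ^ (((n : ℂ) + 1 / 2) ^ 2)

/-- Jacobi theta function `θ₃(q) = ∑_{n ∈ ℤ} q^{n²}`. -/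
noncomputable def theta3 (q : ℂ) : ℂ := ∑' n : ℤ, q ^ (n ^ 2)

/-- Jacobi theta function `θ₄(q) = ∑_{n ∈ ℤ} (−1)ⁿ q^{n²}`. -/
noncomputable def theta4 (q : ℂ) : ℂ := ∑' n : ℤ, (-1 : ℂ) ^ n * q ^ (n ^ 2)

open Complex

namespace Jacobi4

abbrev P := (ℤ × ℤ) × (ℤ × ℤ)

def e2 (n : ℤ) : ℕ := (n * n + n).toNat
def e3 (n : ℤ) : ℕ := n.natAbs ^ 2

lemma e2_cast (n : ℤ) : (e2 n : ℤ) = n * n + n := by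
  have : (0:ℤ) ≤ n * n + n := by nlinarith [sq_nonneg (2*n+1)]
  simp [e2, Int.toNat_of_nonneg this]

lemma e3_cast (n : ℤ) : (e3 n : ℤ) = n ^ 2 := by
  simp only [e3]
  rw [show ((n.natAbs ^ 2 : ℕ) : ℤ) = (n.natAbs : ℤ) ^ 2 by push_cast; ring]
  exact Int.natAbs_sq n

lemma e2_ofNat (n : ℕ) : e2 (n : ℤ) = n * n + n := by
  simp only [e2]
  rw [show ((n:ℤ) * n + n) = ((n * n + n : ℕ) : ℤ) by push_cast; ring, Int.toNat_natCast]

lemma e2_neg (n : ℕ) : e2 (-((n:ℤ)+1)) = n * n + n := by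
  simp only [e2]
  rw [show (-((n:ℤ)+1) * -((n:ℤ)+1) + -((n:ℤ)+1)) = ((n * n + n : ℕ) : ℤ) by push_cast; ring,
    Int.toNat_natCast]

lemma e2_neg_one_sub (n : ℤ) : e2 (-1 - n) = e2 n := by
  simp only [e2]; congr 1; ring

lemma e3_ofNat (n : ℕ) : e3 (n : ℤ) = n ^ 2 := by simp [e3]

lemma e3_neg (n : ℕ) : e3 (-((n:ℤ)+1)) = (n+1) ^ 2 := by
  simp only [e3]
  rw [show (-((n:ℤ)+1)) = -((n+1 : ℕ) : ℤ) by push_cast; ring, Int.natAbs_neg, Int.natAbs_natCast]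

def Qe (p : P) : ℕ := (e3 p.1.1 + e3 p.1.2) + (e3 p.2.1 + e3 p.2.2)
def Ee (p : P) : ℕ := (e2 p.1.1 + e2 p.1.2) + (e2 p.2.1 + e2 p.2.2)
def sg (p : P) : ℤ := (p.1.1 + p.1.2) + (p.2.1 + p.2.2)

/-! ### The combinatorial bijections -/

def flip (p : P) : P := ((p.1.1, p.1.2), (p.2.1, -1 - p.2.2))

lemma flip_flip (p : P) : flip (flip p) = p := by
  simp only [flip]; ring_nf

lemma sg_flip (p : P) : sg (flip p) = sg p - 2 * p.2.2 - 1 := by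
  simp only [sg, flip]; ring

lemma Ee_flip (p : P) : Ee (flip p) = Ee p := by
  simp only [Ee, flip, e2_neg_one_sub]

def had (m : P) : P :=
  (((m.1.1 + m.1.2 + m.2.1 + m.2.2 + 2) / 2, (m.1.1 + m.1.2 - m.2.1 - m.2.2) / 2),
   ((m.1.1 - m.1.2 + m.2.1 - m.2.2) / 2, (m.1.1 - m.1.2 - m.2.1 + m.2.2) / 2))

def hadInv (v : P) : P :=
  (((v.1.1 + v.1.2 + v.2.1 + v.2.2 - 1) / 2, (v.1.1 + v.1.2 - v.2.1 - v.2.2 - 1) / 2),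
   ((v.1.1 - v.1.2 + v.2.1 - v.2.2 - 1) / 2, (v.1.1 - v.1.2 - v.2.1 + v.2.2 - 1) / 2))

lemma had_spec (m : P) (hm : Even (sg m)) :
    2 * (had m).1.1 = m.1.1 + m.1.2 + m.2.1 + m.2.2 + 2 ∧
    2 * (had m).1.2 = m.1.1 + m.1.2 - m.2.1 - m.2.2 ∧
    2 * (had m).2.1 = m.1.1 - m.1.2 + m.2.1 - m.2.2 ∧
    2 * (had m).2.2 = m.1.1 - m.1.2 - m.2.1 + m.2.2 := by
  rw [Int.even_iff] at hm
  simp only [sg] at hm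
  simp only [had]
  omega

lemma sg_had (m : P) (hm : Even (sg m)) : ¬ Even (sg (had m)) := by
  obtain ⟨h1, h2, h3, h4⟩ := had_spec m hm
  rw [Int.even_iff] at *
  simp only [sg] at *
  omega

lemma sg_hadInv (v : P) (hv : ¬ Even (sg v)) : Even (sg (hadInv v)) := by
  rw [Int.even_iff] at *
  simp only [sg, hadInv] at *
  omega

lemma hadInv_had (m : P) (hm : Even (sg m)) : hadInv (had m) = m := by
  rw [Int.even_iff] at hm
  simp only [sg] at hm
  simp only [had, hadInv, Prod.ext_iff]
  refine ⟨⟨?_, ?_⟩, ?_, ?_⟩ <;> omega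

lemma had_hadInv (v : P) (hv : ¬ Even (sg v)) : had (hadInv v) = v := by
  rw [Int.even_iff] at hv
  simp only [sg] at hv
  simp only [had, hadInv, Prod.ext_iff]
  refine ⟨⟨?_, ?_⟩, ?_, ?_⟩ <;> omega

lemma Qe_had (m : P) (hm : Even (sg m)) : Qe (had m) = Ee m + 1 := by
  obtain ⟨h1, h2, h3, h4⟩ := had_spec m hm
  have key : (Qe (had m) : ℤ) = (Ee m : ℤ) + 1 := by
    obtain ⟨⟨a, b⟩, c, d⟩ := m
    simp only [Qe, Ee] at *
    push_cast [e3_cast, e2_cast]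
    set v1 := (had ((a,b),(c,d))).1.1
    set v2 := (had ((a,b),(c,d))).1.2
    set v3 := (had ((a,b),(c,d))).2.1
    set v4 := (had ((a,b),(c,d))).2.2
    have h4Q : 4 * (v1^2 + v2^2 + (v3^2 + v4^2)) =
        4 * ((a*a+a + (b*b+b)) + (c*c+c + (d*d+d)) + 1) := by
      linear_combination (2*v1 + (a+b+c+d+2)) * h1 + (2*v2 + (a+b-c-d)) * h2 +
        (2*v3 + (a-b+c-d)) * h3 + (2*v4 + (a-b-c+d)) * h4
    linarith
  exact_mod_cast key

/-! ### summability -/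

variable {q : ℂ}

lemma summable_nat_aux (hq : ‖q‖ < 1) (E : ℕ → ℕ) (hE : ∀ n, n ≤ E n) :
    Summable fun n : ℕ => ‖q‖ ^ E n :=
  Summable.of_nonneg_of_le (fun n => by positivity)
    (fun n => pow_le_pow_of_le_one (norm_nonneg q) hq.le (hE n))
    (summable_geometric_of_lt_one (norm_nonneg q) hq)

lemma summable_int_aux (hq : ‖q‖ < 1) (E : ℤ → ℕ) (hp : ∀ n : ℕ, n ≤ E n)
    (hn : ∀ n : ℕ, n ≤ E (-((n:ℤ)+1))) : Summable fun n : ℤ => ‖q‖ ^ E n := by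
  apply Summable.of_nat_of_neg_add_one
  · exact summable_nat_aux hq _ hp
  · exact summable_nat_aux hq _ (by exact_mod_cast hn)

lemma summable_e2 (hq : ‖q‖ < 1) : Summable fun n : ℤ => ‖q‖ ^ e2 n := by
  refine summable_int_aux hq e2 (fun n => ?_) (fun n => ?_)
  · rw [e2_ofNat]; omega
  · rw [e2_neg]; omega

lemma summable_e3 (hq : ‖q‖ < 1) : Summable fun n : ℤ => ‖q‖ ^ e3 n := by
  refine summable_int_aux hq e3 (fun n => ?_) (fun n => ?_)
  · rw [e3_ofNat]; nlinarith
  · rw [e3_neg]; nlinarith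

/-! ### fourth powers of tsums -/

lemma tsum_pow_four {f : ℤ → ℂ} (h : Summable fun n => ‖f n‖) :
    (∑' n, f n) ^ 4 = ∑' p : P, (f p.1.1 * f p.1.2) * (f p.2.1 * f p.2.2) := by
  have h2 : (∑' n, f n) ^ 2 = ∑' p : ℤ × ℤ, f p.1 * f p.2 := by
    rw [sq]; exact tsum_mul_tsum_of_summable_norm h h
  have hn2 : Summable fun p : ℤ × ℤ => ‖f p.1 * f p.2‖ := h.mul_norm h
  calc (∑' n, f n) ^ 4 = (∑' n, f n) ^ 2 * (∑' n, f n) ^ 2 := by ring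
    _ = _ := by rw [h2]; exact tsum_mul_tsum_of_summable_norm hn2 hn2

lemma summable_four {f : ℤ → ℂ} (h : Summable fun n => ‖f n‖) :
    Summable fun p : P => (f p.1.1 * f p.1.2) * (f p.2.1 * f p.2.2) :=
  ((h.mul_norm h).mul_norm (h.mul_norm h)).of_norm

end Jacobi4

namespace Jacobi4

variable {q : ℂ}

lemma norm_f3 : (fun n : ℤ => ‖q ^ e3 n‖) = fun n => ‖q‖ ^ e3 n := by
  funext n; rw [norm_pow]

lemma norm_f4 : (fun n : ℤ => ‖(-1:ℂ) ^ n * q ^ e3 n‖) = fun n => ‖q‖ ^ e3 n := by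
  funext n; simp [norm_zpow]

lemma norm_f2 : (fun n : ℤ => ‖q ^ e2 n‖) = fun n => ‖q‖ ^ e2 n := by
  funext n; rw [norm_pow]

lemma prod4_e2 (p : P) :
    (q ^ e2 p.1.1 * q ^ e2 p.1.2) * (q ^ e2 p.2.1 * q ^ e2 p.2.2) = q ^ Ee p := by
  rw [← pow_add, ← pow_add, ← pow_add]; rfl

lemma prod4_e3 (p : P) :
    (q ^ e3 p.1.1 * q ^ e3 p.1.2) * (q ^ e3 p.2.1 * q ^ e3 p.2.2) = q ^ Qe p := by
  rw [← pow_add, ← pow_add, ← pow_add]; rfl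

lemma prod4_e4 (p : P) :
    (((-1:ℂ) ^ p.1.1 * q ^ e3 p.1.1) * ((-1:ℂ) ^ p.1.2 * q ^ e3 p.1.2)) *
      (((-1:ℂ) ^ p.2.1 * q ^ e3 p.2.1) * ((-1:ℂ) ^ p.2.2 * q ^ e3 p.2.2)) =
        (-1:ℂ) ^ sg p * q ^ Qe p := by
  have h : (-1:ℂ) ≠ 0 := by norm_num
  rw [sg, Qe, zpow_add₀ h, zpow_add₀ h, zpow_add₀ h, pow_add, pow_add, pow_add]
  ring

section summable
variable (hq : ‖q‖ < 1)
include hq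

lemma summable_Ee : Summable fun p : P => q ^ Ee p := by
  have := summable_four (f := fun n : ℤ => q ^ e2 n) (by rw [norm_f2]; exact summable_e2 hq)
  simpa only [prod4_e2] using this

lemma summable_Qe : Summable fun p : P => q ^ Qe p := by
  have := summable_four (f := fun n : ℤ => q ^ e3 n) (by rw [norm_f3]; exact summable_e3 hq)
  simpa only [prod4_e3] using this

lemma summable_Qe4 : Summable fun p : P => (-1:ℂ) ^ sg p * q ^ Qe p := by
  have := summable_four (f := fun n : ℤ => (-1:ℂ) ^ n * q ^ e3 n)
    (by rw [norm_f4]; exact summable_e3 hq)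
  simpa only [prod4_e4] using this

end summable

/-! ### the two subtype equivs -/

def S (_q : ℂ) : Set P := {p : P | Even (sg p)}

lemma mem_S {p : P} : p ∈ S q ↔ Even (sg p) := Iff.rfl
lemma mem_Sc {p : P} : p ∈ (S q)ᶜ ↔ ¬ Even (sg p) := Iff.rfl

lemma flip_parity {p : P} (h : Even (sg p)) : ¬ Even (sg (flip p)) := by
  rw [Int.even_iff] at *; rw [sg_flip]; omega

lemma flip_parity' {p : P} (h : ¬ Even (sg p)) : Even (sg (flip p)) := by
  rw [Int.even_iff] at *; rw [sg_flip]; omega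

noncomputable def eFlip : (S q) ≃ ((S q)ᶜ : Set P) where
  toFun x := ⟨flip x.1, flip_parity x.2⟩
  invFun y := ⟨flip y.1, flip_parity' y.2⟩
  left_inv x := Subtype.ext (flip_flip x.1)
  right_inv y := Subtype.ext (flip_flip y.1)

noncomputable def eHad : (S q) ≃ ((S q)ᶜ : Set P) where
  toFun x := ⟨had x.1, sg_had x.1 x.2⟩
  invFun y := ⟨hadInv y.1, sg_hadInv y.1 y.2⟩
  left_inv x := Subtype.ext (hadInv_had x.1 x.2)
  right_inv y := Subtype.ext (had_hadInv y.1 y.2)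

/-! ### the key combinatorial identity -/

set_option maxHeartbeats 1000000 in
lemma key (hq : ‖q‖ < 1) :
    ∑' p : P, q ^ (Ee p + 1) = ∑' p : P, (if Even (sg p) then 0 else 2 * q ^ Qe p) := by
  have hEe : Summable fun p : P => q ^ (Ee p + 1) := by
    have := (summable_Ee hq).mul_left q
    simpa only [← pow_succ'] using this
  have hs : Summable fun x : (S q) => q ^ (Ee x.1 + 1) := hEe.subtype _
  have hsc : Summable fun x : ((S q)ᶜ : Set P) => q ^ (Ee x.1 + 1) := hEe.subtype _
  have split : (∑' x : (S q), q ^ (Ee x.1 + 1)) + ∑' x : ((S q)ᶜ : Set P), q ^ (Ee x.1 + 1)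
      = ∑' p : P, q ^ (Ee p + 1) :=
    Summable.tsum_add_tsum_compl (f := fun p : P => q ^ (Ee p + 1)) hs hsc
  have flip_eq : ∑' x : ((S q)ᶜ : Set P), q ^ (Ee x.1 + 1)
      = ∑' x : (S q), q ^ (Ee x.1 + 1) := by
    rw [← (eFlip (q := q)).tsum_eq (fun y : ((S q)ᶜ : Set P) => q ^ (Ee y.1 + 1))]
    exact tsum_congr fun x => by simp [eFlip, Ee_flip]
  have had_eq : ∑' x : (S q), q ^ (Ee x.1 + 1)
      = ∑' y : ((S q)ᶜ : Set P), q ^ Qe y.1 := by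
    rw [← (eHad (q := q)).tsum_eq (fun y : ((S q)ᶜ : Set P) => q ^ Qe y.1)]
    exact tsum_congr fun x => by rw [eHad]; simp only [Equiv.coe_fn_mk]; rw [Qe_had x.1 x.2]
  have rhs : ∑' p : P, (if Even (sg p) then 0 else 2 * q ^ Qe p)
      = 2 * ∑' y : ((S q)ᶜ : Set P), q ^ Qe y.1 := by
    rw [← tsum_mul_left]
    rw [tsum_subtype ((S q)ᶜ) (fun p => 2 * q ^ Qe p)]
    refine tsum_congr fun p => ?_
    by_cases h : Even (sg p)
    · rw [Set.indicator_of_notMem (show p ∉ (S q)ᶜ from fun hc => hc h), if_pos h]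
    · rw [Set.indicator_of_mem (show p ∈ (S q)ᶜ from h), if_neg h]
  rw [rhs, ← split, flip_eq, had_eq]
  ring

end Jacobi4

namespace Jacobi4

variable {q : ℂ}

lemma theta2_sum_int (hq : ‖q‖ < 1) :
    ∑' n : ℤ, q ^ e2 n = 2 * ∑' n : ℕ, q ^ (n * n + n) := by
  have h1 : Summable fun n : ℕ => q ^ (n * n + n) := by
    apply Summable.of_norm
    simp only [norm_pow]
    exact summable_nat_aux hq _ fun n => by omega
  rw [tsum_of_nat_of_neg_add_one (by simpa only [e2_ofNat] using h1)
    (by simpa only [e2_neg] using h1)]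
  simp only [e2_ofNat, e2_neg]
  ring

lemma cpow_quarter_pow (h0 : q ≠ 0) : (q ^ (1/4 : ℂ)) ^ (4 : ℕ) = q := by
  rw [← cpow_nat_mul]
  norm_num

lemma theta2_pow (hq : ‖q‖ < 1) (h0 : q ≠ 0) :
    theta2 q ^ 4 = q * ∑' p : P, q ^ Ee p := by
  have hterm : ∀ n : ℕ, q ^ (((n:ℂ) + 1/2)^2) = q ^ (n*n+n) * q ^ (1/4:ℂ) := fun n => by
    rw [show (((n:ℂ)+1/2)^2) = ((n*n+n : ℕ) : ℂ) + 1/4 by push_cast; ring,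
      cpow_add _ _ h0, cpow_natCast]
  have h2 : theta2 q = (∑' n : ℤ, q ^ e2 n) * q ^ (1/4 : ℂ) := by
    unfold theta2
    rw [tsum_congr hterm, tsum_mul_right, theta2_sum_int hq]
    ring
  rw [h2, mul_pow, cpow_quarter_pow h0, tsum_pow_four
    (by rw [norm_f2]; exact summable_e2 hq)]
  rw [tsum_congr prod4_e2]
  ring

lemma theta3_pow (hq : ‖q‖ < 1) : theta3 q ^ 4 = ∑' p : P, q ^ Qe p := by
  have h : theta3 q = ∑' n : ℤ, q ^ e3 n := by
    unfold theta3
    exact tsum_congr fun n => by rw [← e3_cast n, zpow_natCast]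
  rw [h, tsum_pow_four (by rw [norm_f3]; exact summable_e3 hq), tsum_congr prod4_e3]

lemma theta4_pow (hq : ‖q‖ < 1) :
    theta4 q ^ 4 = ∑' p : P, (-1:ℂ) ^ sg p * q ^ Qe p := by
  have h : theta4 q = ∑' n : ℤ, (-1:ℂ) ^ n * q ^ e3 n := by
    unfold theta4
    exact tsum_congr fun n => by rw [← e3_cast n, zpow_natCast]
  rw [h, tsum_pow_four (by rw [norm_f4]; exact summable_e3 hq), tsum_congr prod4_e4]

end Jacobi4

open Jacobi4 in
theorem theta2_pow_four_add_theta4_pow_four' (q : ℂ) (hq : ‖q‖ < 1) :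
    theta2 q ^ 4 + theta4 q ^ 4 = theta3 q ^ 4 := by
  rcases eq_or_ne q 0 with rfl | h0
  · have h2 : theta2 0 = 0 := by
      unfold theta2
      rw [tsum_congr (fun n : ℕ => ?_), tsum_zero, mul_zero]
      apply zero_cpow
      apply pow_ne_zero
      intro hc
      have := congrArg Complex.re hc
      simp at this
      nlinarith [Nat.cast_nonneg (α := ℝ) n]
    have h3 : theta3 0 = 1 := by
      unfold theta3
      rw [tsum_eq_single 0 (fun n hn => zero_zpow _ (pow_ne_zero 2 hn))]
      norm_num
    have h4 : theta4 0 = 1 := by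
      unfold theta4
      rw [tsum_eq_single 0 (fun n hn => by rw [zero_zpow _ (pow_ne_zero 2 hn), mul_zero])]
      norm_num
    rw [h2, h3, h4]; norm_num
  · have hq' : ‖q‖ < 1 := by exact hq
    rw [theta2_pow hq' h0, theta3_pow hq', theta4_pow hq']
    have h1 : q * ∑' p : P, q ^ Ee p = ∑' p : P, q ^ (Ee p + 1) := by
      rw [← tsum_mul_left]
      exact tsum_congr fun p => (pow_succ' q _).symm
    have h2 : (∑' p : P, q ^ Qe p) - ∑' p : P, (-1:ℂ) ^ sg p * q ^ Qe p
        = ∑' p : P, (if Even (sg p) then 0 else 2 * q ^ Qe p) := by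
      rw [← Summable.tsum_sub (summable_Qe hq') (summable_Qe4 hq')]
      refine tsum_congr fun p => ?_
      by_cases h : Even (sg p)
      · rw [if_pos h, h.neg_one_zpow]; ring
      · rw [if_neg h, (Int.not_even_iff_odd.mp h).neg_one_zpow]; ring
    rw [h1, key hq', ← h2]
    ring

/-- The Jacobi identity `θ₂⁴ + θ₄⁴ = θ₃⁴`. -/
theorem theta2_pow_four_add_theta4_pow_four (q : ℂ) (hq : ‖q‖ < 1) :
    theta2 q ^ 4 + theta4 q ^ 4 = theta3 q ^ 4 :=
  theta2_pow_four_add_theta4_pow_four' q hq
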